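/- For every integer r ≥ 1 and every g ∈ {0,1}, one has C(r−g+1/4, r+1−g)·C(r−1/4, r) < 1/(√2·π·r), where C(α, m) = α(α−1)⋯(α−m+1)/m! is the generalized binomial coefficient. -/

import Mathlib

open Finset

/-- `∏_{k<n} (x+k) = Γ(x+n)/Γ(x)` for `x > 0`. -/
lemma prod_add_eq_Gamma (x : ℝ) (hx : 0 < x) (n : ℕ) :
    ∏ k ∈ Finset.range n, (x + k) = Real.Gamma (x + n) / Real.Gamma x := by
  induction n with
  | zero => simp [div_self (Real.Gamma_pos_of_pos hx).ne']
  | succ n ih =>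
    have hxn : (0:ℝ) < x + n := by positivity
    have h1 : Real.Gamma (x + n + 1) = (x + n) * Real.Gamma (x + n) :=
      Real.Gamma_add_one hxn.ne'
    rw [Finset.prod_range_succ, ih]
    push_cast
    rw [show x + ((n:ℝ) + 1) = x + n + 1 by ring, h1]
    have hg : Real.Gamma x ≠ 0 := (Real.Gamma_pos_of_pos hx).ne'
    field_simp

/-- Consequence of log-convexity of `Γ`: `x·Γ(x+1/4)·Γ(x+3/4) ≤ Γ(x+1)²`. -/
lemma gamma_ineq {x : ℝ} (hx : 0 < x) :
    x * (Real.Gamma (x + 1/4) * Real.Gamma (x + 3/4)) ≤ Real.Gamma (x + 1) ^ 2 := by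
  have hx1 : (0:ℝ) < x + 1 := by linarith
  have hg : 0 < Real.Gamma x := Real.Gamma_pos_of_pos hx
  have hg1 : 0 < Real.Gamma (x + 1) := Real.Gamma_pos_of_pos hx1
  have h1 : Real.Gamma (x + 1/4) ≤ Real.Gamma x ^ (3/4:ℝ) * Real.Gamma (x+1) ^ (1/4:ℝ) := by
    have := Real.Gamma_mul_add_mul_le_rpow_Gamma_mul_rpow_Gamma hx hx1
      (by norm_num : (0:ℝ) < 3/4) (by norm_num : (0:ℝ) < 1/4) (by norm_num)
    rw [show (3/4:ℝ) * x + 1/4 * (x+1) = x + 1/4 by ring] at this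
    exact this
  have h2 : Real.Gamma (x + 3/4) ≤ Real.Gamma x ^ (1/4:ℝ) * Real.Gamma (x+1) ^ (3/4:ℝ) := by
    have := Real.Gamma_mul_add_mul_le_rpow_Gamma_mul_rpow_Gamma hx hx1
      (by norm_num : (0:ℝ) < 1/4) (by norm_num : (0:ℝ) < 3/4) (by norm_num)
    rw [show (1/4:ℝ) * x + 3/4 * (x+1) = x + 3/4 by ring] at this
    exact this
  have hmul : Real.Gamma (x+1/4) * Real.Gamma (x+3/4) ≤ Real.Gamma x * Real.Gamma (x+1) := by
    calc Real.Gamma (x+1/4) * Real.Gamma (x+3/4)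
        ≤ (Real.Gamma x ^ (3/4:ℝ) * Real.Gamma (x+1) ^ (1/4:ℝ)) *
          (Real.Gamma x ^ (1/4:ℝ) * Real.Gamma (x+1) ^ (3/4:ℝ)) :=
          mul_le_mul h1 h2 (Real.Gamma_pos_of_pos (by linarith)).le (by positivity)
      _ = Real.Gamma x * Real.Gamma (x+1) := by
          rw [mul_mul_mul_comm, ← Real.rpow_add hg, ← Real.rpow_add hg1]
          norm_num
  have hrec : Real.Gamma (x+1) = x * Real.Gamma x := Real.Gamma_add_one hx.ne'
  calc x * (Real.Gamma (x+1/4) * Real.Gamma (x+3/4))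
      ≤ x * (Real.Gamma x * Real.Gamma (x+1)) := mul_le_mul_of_nonneg_left hmul hx.le
    _ = Real.Gamma (x+1) ^ 2 := by rw [hrec]; ring

/-- The key auxiliary quantity: `C(r-3/4, r) * C(r-1/4, r)` in product form. -/
noncomputable def Tfun (r : ℕ) : ℝ :=
  ((∏ k ∈ Finset.range r, ((k:ℝ) + 1/4)) * ∏ k ∈ Finset.range r, ((k:ℝ) + 3/4)) /
    (r.factorial : ℝ)^2

lemma Tfun_pos (r : ℕ) : 0 < Tfun r := by
  unfold Tfun
  have h1 : 0 < ∏ k ∈ Finset.range r, ((k:ℝ) + 1/4) :=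
    Finset.prod_pos fun k _ => by positivity
  have h2 : 0 < ∏ k ∈ Finset.range r, ((k:ℝ) + 3/4) :=
    Finset.prod_pos fun k _ => by positivity
  have h3 : (0:ℝ) < (r.factorial : ℝ) := by exact_mod_cast r.factorial_pos
  positivity

/-- Euler reflection at `1/4`: `Γ(1/4)Γ(3/4) = √2·π`. -/
lemma refl14 : Real.Gamma (1/4) * Real.Gamma (3/4) = Real.sqrt 2 * Real.pi := by
  have h := Real.Gamma_mul_Gamma_one_sub (1/4)
  rw [show (1:ℝ) - 1/4 = 3/4 by norm_num, show Real.pi * (1/4) = Real.pi/4 by ring,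
    Real.sin_pi_div_four] at h
  rw [h]
  have h2 : Real.sqrt 2 * Real.sqrt 2 = 2 := Real.mul_self_sqrt (by norm_num)
  have h2' : (0:ℝ) < Real.sqrt 2 := by positivity
  field_simp
  nlinarith [Real.pi_pos]

/-- `r ↦ r·Tfun r` is strictly increasing. -/
lemma Tfun_mono (r : ℕ) : (r:ℝ) * Tfun r < ((r:ℝ)+1) * Tfun (r+1) := by
  have hT : 0 < Tfun r := Tfun_pos r
  have key : Tfun (r+1) = Tfun r * (((r:ℝ)+1/4) * ((r:ℝ)+3/4) / ((r:ℝ)+1)^2) := by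
    unfold Tfun
    rw [Finset.prod_range_succ, Finset.prod_range_succ, Nat.factorial_succ]
    have h3 : ((r.factorial : ℝ)) ≠ 0 := by exact_mod_cast r.factorial_pos.ne'
    have h4 : ((r:ℝ)+1) ≠ 0 := by positivity
    push_cast
    field_simp
    ring
  rw [key]
  have h4 : (0:ℝ) < (r:ℝ)+1 := by positivity
  rw [show ((r:ℝ)+1) * (Tfun r * (((r:ℝ)+1/4) * ((r:ℝ)+3/4) / ((r:ℝ)+1)^2))
      = Tfun r * (((r:ℝ)+1/4) * ((r:ℝ)+3/4) / ((r:ℝ)+1)) by field_simp]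
  rw [show (r:ℝ) * Tfun r = Tfun r * (r:ℝ) by ring]
  apply mul_lt_mul_of_pos_left _ hT
  rw [lt_div_iff₀ h4]
  nlinarith

lemma Tfun_le (r : ℕ) (hr : 1 ≤ r) :
    (r:ℝ) * Tfun r ≤ 1 / (Real.sqrt 2 * Real.pi) := by
  have hr0 : (0:ℝ) < (r:ℝ) := by exact_mod_cast hr
  have hA : ∏ k ∈ Finset.range r, ((k:ℝ)+1/4)
      = Real.Gamma ((r:ℝ) + 1/4) / Real.Gamma (1/4) := by
    rw [show (r:ℝ) + 1/4 = 1/4 + (r:ℝ) by ring, ← prod_add_eq_Gamma (1/4) (by norm_num) r]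
    exact Finset.prod_congr rfl fun k _ => by ring
  have hB : ∏ k ∈ Finset.range r, ((k:ℝ)+3/4)
      = Real.Gamma ((r:ℝ) + 3/4) / Real.Gamma (3/4) := by
    rw [show (r:ℝ) + 3/4 = 3/4 + (r:ℝ) by ring, ← prod_add_eq_Gamma (3/4) (by norm_num) r]
    exact Finset.prod_congr rfl fun k _ => by ring
  have hfact : (r.factorial : ℝ) = Real.Gamma ((r:ℝ) + 1) :=
    (Real.Gamma_nat_eq_factorial r).symm
  have g1 : 0 < Real.Gamma (1/4) := Real.Gamma_pos_of_pos (by norm_num)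
  have g3 : 0 < Real.Gamma (3/4) := Real.Gamma_pos_of_pos (by norm_num)
  have gR : 0 < Real.Gamma ((r:ℝ) + 1) := Real.Gamma_pos_of_pos (by positivity)
  have hineq := gamma_ineq hr0
  rw [← refl14]
  unfold Tfun
  rw [hA, hB, hfact]
  calc (r:ℝ) * (Real.Gamma ((r:ℝ)+1/4) / Real.Gamma (1/4) *
        (Real.Gamma ((r:ℝ)+3/4) / Real.Gamma (3/4)) / Real.Gamma ((r:ℝ)+1)^2)
      = ((r:ℝ) * (Real.Gamma ((r:ℝ)+1/4) * Real.Gamma ((r:ℝ)+3/4))) /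
          Real.Gamma ((r:ℝ)+1)^2 * (1/(Real.Gamma (1/4) * Real.Gamma (3/4))) := by
        ring
    _ ≤ 1 * (1/(Real.Gamma (1/4) * Real.Gamma (3/4))) := by
        apply mul_le_mul_of_nonneg_right _ (by positivity)
        rw [div_le_one (by positivity)]
        exact hineq
    _ = 1/(Real.Gamma (1/4) * Real.Gamma (3/4)) := one_mul _

lemma Tfun_lt (r : ℕ) (hr : 1 ≤ r) :
    Tfun r < 1 / (Real.sqrt 2 * Real.pi * (r:ℝ)) := by
  have hr0 : (0:ℝ) < (r:ℝ) := by exact_mod_cast hr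
  have h1 := Tfun_mono r
  have h2 := Tfun_le (r+1) (by omega)
  push_cast at h2
  have h3 : (r:ℝ) * Tfun r < 1 / (Real.sqrt 2 * Real.pi) := lt_of_lt_of_le h1 h2
  rw [show 1 / (Real.sqrt 2 * Real.pi * (r:ℝ)) = (1 / (Real.sqrt 2 * Real.pi)) / (r:ℝ) by
    field_simp]
  rw [lt_div_iff₀ hr0, mul_comm]
  exact h3

lemma reflect_prod (r : ℕ) (c : ℝ) :
    ∏ i ∈ Finset.range r, ((r:ℝ) - 1 + c - (i:ℝ)) = ∏ k ∈ Finset.range r, ((k:ℝ) + c) := by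
  rw [← Finset.prod_range_reflect (fun j => (j:ℝ) + c) r]
  refine Finset.prod_congr rfl fun j hj => ?_
  rw [Finset.mem_range] at hj
  have h1 : ((r - 1 - j : ℕ) : ℝ) = (r:ℝ) - 1 - (j:ℝ) := by
    have : (1:ℕ) ≤ r := by omega
    rw [Nat.cast_sub (by omega), Nat.cast_sub this]
    norm_num
  simp only [h1]
  ring

/-- The generalized binomial coefficient `C(α, m) = α(α-1)⋯(α-m+1)/m!`. -/
noncomputable def gchoose (α : ℝ) (m : ℕ) : ℝ :=
  (∏ i ∈ Finset.range m, (α - i)) / (m.factorial : ℝ)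

/-- For every `r ≥ 1` and `g ∈ {0,1}`,
`C(r-g+1/4, r+1-g)·C(r-1/4, r) < 1/(√2·π·r)`. -/
theorem gchoose_product_bound
    (r g : ℕ) (hr : 1 ≤ r) (hg : g = 0 ∨ g = 1) :
    gchoose ((r:ℝ) - (g:ℝ) + 1/4) (r + 1 - g) * gchoose ((r:ℝ) - 1/4) r
      < 1 / (Real.sqrt 2 * Real.pi * (r:ℝ)) := by
  have hfac : (0:ℝ) < (r.factorial : ℝ) := by exact_mod_cast r.factorial_pos
  have hB : gchoose ((r:ℝ) - 1/4) r
      = (∏ k ∈ Finset.range r, ((k:ℝ)+3/4)) / (r.factorial : ℝ) := by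
    unfold gchoose
    congr 1
    rw [← reflect_prod r (3/4)]
    exact Finset.prod_congr rfl fun i _ => by ring
  rcases hg with hg | hg
  · -- g = 0
    subst hg
    have hA : gchoose ((r:ℝ) - (0:ℕ) + 1/4) (r + 1 - 0)
        = ((∏ k ∈ Finset.range r, ((k:ℝ)+1/4)) * ((r:ℝ)+1/4)) /
            (((r:ℝ)+1) * (r.factorial : ℝ)) := by
      unfold gchoose
      rw [show r + 1 - 0 = r + 1 from rfl]
      have hnum : ∏ i ∈ Finset.range (r+1), ((r:ℝ) - (0:ℕ) + 1/4 - (i:ℝ))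
          = ∏ k ∈ Finset.range (r+1), ((k:ℝ) + 1/4) := by
        rw [← reflect_prod (r+1) (1/4)]
        refine Finset.prod_congr rfl fun i _ => ?_
        push_cast
        ring
      rw [hnum, Finset.prod_range_succ, Nat.factorial_succ]
      push_cast
      ring_nf
    rw [hA, hB]
    have hval : (∏ k ∈ Finset.range r, ((k:ℝ)+1/4)) * ((r:ℝ)+1/4) /
          (((r:ℝ)+1) * (r.factorial : ℝ)) *
          ((∏ k ∈ Finset.range r, ((k:ℝ)+3/4)) / (r.factorial : ℝ))
        = Tfun r * (((r:ℝ)+1/4) / ((r:ℝ)+1)) := by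
      unfold Tfun
      field_simp
      ring
    rw [hval]
    have hT := Tfun_pos r
    have hlt1 : ((r:ℝ)+1/4) / ((r:ℝ)+1) < 1 := by
      rw [div_lt_one (by positivity)]
      linarith
    calc Tfun r * (((r:ℝ)+1/4) / ((r:ℝ)+1)) < Tfun r * 1 :=
          mul_lt_mul_of_pos_left hlt1 hT
      _ = Tfun r := mul_one _
      _ < 1 / (Real.sqrt 2 * Real.pi * (r:ℝ)) := Tfun_lt r hr
  · -- g = 1
    subst hg
    have hA : gchoose ((r:ℝ) - (1:ℕ) + 1/4) (r + 1 - 1)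
        = (∏ k ∈ Finset.range r, ((k:ℝ)+1/4)) / (r.factorial : ℝ) := by
      unfold gchoose
      rw [show r + 1 - 1 = r from rfl]
      congr 1
      rw [← reflect_prod r (1/4)]
      refine Finset.prod_congr rfl fun i _ => ?_
      push_cast
      ring
    rw [hA, hB]
    have hval : (∏ k ∈ Finset.range r, ((k:ℝ)+1/4)) / (r.factorial : ℝ) *
          ((∏ k ∈ Finset.range r, ((k:ℝ)+3/4)) / (r.factorial : ℝ)) = Tfun r := by
      unfold Tfun
      rw [div_mul_div_comm, ← sq]
    rw [hval]
    exact Tfun_lt r hr
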